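/- Fix ζ > 0, let Σ be positive semidefinite with finite trace, and let μ⋆ = μ⋆(ζ, μ) be defined implicitly by μ = μ⋆ − n/(1 + Tr(Σ(ζI + μ⋆Σ)⁻¹)). Then the derivative of μ⋆ with respect to μ satisfies 0 ≤ ∂μ⋆/∂μ ≤ 1 + Tr(Σ(ζI + μ⋆Σ)⁻¹). -/

import Mathlib

open Matrix

theorem trace_aux {d : ℕ} (Sig U : Matrix (Fin d) (Fin d) ℝ) (e : Fin d → ℝ)
    (hUU : U * star U = 1) (hUU' : star U * U = 1)
    (hspec : Sig = U * diagonal e * star U)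
    (ζ s : ℝ) (hpos : ∀ i, ζ + s * e i ≠ 0) :
    (Sig * (ζ • (1 : Matrix (Fin d) (Fin d) ℝ) + s • Sig)⁻¹).trace
      = ∑ i, e i / (ζ + s * e i) := by
  have hdiag : diagonal (fun i => ζ + s * e i)
      = ζ • (1 : Matrix (Fin d) (Fin d) ℝ) + s • diagonal e := by
    ext i j
    rcases eq_or_ne i j with h | h <;>
      simp [diagonal_apply, Matrix.one_apply, h, smul_eq_mul]
  have hM : ζ • (1 : Matrix (Fin d) (Fin d) ℝ) + s • Sig
      = U * diagonal (fun i => ζ + s * e i) * star U := by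
    rw [hdiag, Matrix.mul_add, Matrix.add_mul, Matrix.mul_smul, Matrix.smul_mul,
      Matrix.mul_smul, Matrix.smul_mul, Matrix.mul_one, hUU, ← hspec]
  have hMinv : (ζ • (1 : Matrix (Fin d) (Fin d) ℝ) + s • Sig)⁻¹
      = U * diagonal (fun i => (ζ + s * e i)⁻¹) * star U := by
    apply inv_eq_right_inv
    rw [hM]
    calc (U * diagonal (fun i => ζ + s * e i) * star U) *
          (U * diagonal (fun i => (ζ + s * e i)⁻¹) * star U)
        = U * (diagonal (fun i => ζ + s * e i) * ((star U * U) *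
            diagonal (fun i => (ζ + s * e i)⁻¹))) * star U := by
          simp only [Matrix.mul_assoc]
      _ = 1 := by
          rw [hUU', Matrix.one_mul, diagonal_mul_diagonal]
          have : (fun i => (ζ + s * e i) * (ζ + s * e i)⁻¹) = fun _ => (1:ℝ) := by
            funext i; exact mul_inv_cancel₀ (hpos i)
          rw [this, diagonal_one, Matrix.mul_one, hUU]
  rw [hMinv, hspec]
  calc ((U * diagonal e * star U) * (U * diagonal (fun i => (ζ + s * e i)⁻¹) * star U)).trace
      = (U * (diagonal e * ((star U * U) * diagonal (fun i => (ζ + s * e i)⁻¹))) * star U).trace := by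
        simp only [Matrix.mul_assoc]
    _ = ∑ i, e i / (ζ + s * e i) := by
        rw [hUU', Matrix.one_mul, diagonal_mul_diagonal, trace_mul_cycle, hUU',
          Matrix.one_mul, trace_diagonal]
        simp [div_eq_mul_inv]

theorem trace_formula {d : ℕ} (Sig : Matrix (Fin d) (Fin d) ℝ) (hSig : Sig.PosSemidef)
    (ζ : ℝ) (hζ : 0 < ζ) (s : ℝ) (hs : 0 ≤ s) :
    (Sig * (ζ • (1 : Matrix (Fin d) (Fin d) ℝ) + s • Sig)⁻¹).trace
      = ∑ i, hSig.1.eigenvalues i / (ζ + s * hSig.1.eigenvalues i) := by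
  have hH := hSig.1
  refine trace_aux Sig (hH.eigenvectorUnitary : Matrix (Fin d) (Fin d) ℝ) hH.eigenvalues
    ((Matrix.mem_unitaryGroup_iff).mp hH.eigenvectorUnitary.2)
    ((Matrix.mem_unitaryGroup_iff').mp hH.eigenvectorUnitary.2)
    (by simpa using hH.spectral_theorem) ζ s (fun i =>
      (add_pos_of_pos_of_nonneg hζ (mul_nonneg hs (hSig.eigenvalues_nonneg i))).ne')

set_option maxHeartbeats 1000000 in
/-- with `μ⋆ = mst μ` defined implicitly by
`μ = μ⋆ − n/(1 + Tr(Σ(ζI + μ⋆Σ)⁻¹))` (for all `μ ≥ 0`), any derivative `D` of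
`mst` at `μ₀ ≥ 0` satisfies `0 ≤ D ≤ 1 + Tr(Σ(ζI + mst μ₀ · Σ)⁻¹)`. -/
theorem stmt8 {d : ℕ} (Sig : Matrix (Fin d) (Fin d) ℝ) (hSig : Sig.PosSemidef)
    (n : ℕ) (hn : 0 < n) (ζ : ℝ) (hζ : 0 < ζ)
    (mst : ℝ → ℝ)
    (hfix : ∀ μ : ℝ, 0 ≤ μ → μ < mst μ ∧
      μ = mst μ - (n : ℝ) /
        (1 + (Sig * (ζ • (1 : Matrix (Fin d) (Fin d) ℝ) + mst μ • Sig)⁻¹).trace))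
    (μ₀ : ℝ) (hμ₀ : 0 ≤ μ₀) (D : ℝ) (hD : HasDerivAt mst D μ₀) :
    0 ≤ D ∧
      D ≤ 1 + (Sig * (ζ • (1 : Matrix (Fin d) (Fin d) ℝ) + mst μ₀ • Sig)⁻¹).trace := by
  classical
  set e : Fin d → ℝ := hSig.1.eigenvalues with he
  have hev : ∀ i, 0 ≤ e i := hSig.eigenvalues_nonneg
  set T : ℝ → ℝ := fun s => ∑ i, e i / (ζ + s * e i) with hTdef
  have htrace : ∀ s : ℝ, 0 ≤ s →
      (Sig * (ζ • (1 : Matrix (Fin d) (Fin d) ℝ) + s • Sig)⁻¹).trace = T s :=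
    fun s hs => trace_formula Sig hSig ζ hζ s hs
  have hd : ∀ s : ℝ, 0 ≤ s → ∀ i, 0 < ζ + s * e i := fun s hs i =>
    add_pos_of_pos_of_nonneg hζ (mul_nonneg hs (hev i))
  have hT0 : ∀ s : ℝ, 0 ≤ s → 0 ≤ T s := fun s hs =>
    Finset.sum_nonneg fun i _ => div_nonneg (hev i) (hd s hs i).le
  -- basic facts at μ₀
  obtain ⟨hlt₀, hfp₀⟩ := hfix μ₀ hμ₀
  set s₁ : ℝ := mst μ₀ with hs₁def
  have hs₁pos : 0 < s₁ := lt_of_le_of_lt hμ₀ hlt₀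
  rw [htrace s₁ hs₁pos.le] at hfp₀
  have hP₁ : 0 < 1 + T s₁ := by linarith [hT0 s₁ hs₁pos.le]
  -- key difference estimate
  have key : ∀ μ : ℝ, μ₀ ≤ μ →
      0 ≤ mst μ - s₁ ∧ mst μ - s₁ ≤ (1 + T s₁) * (μ - μ₀) := by
    intro μ hμμ
    have hμn : 0 ≤ μ := le_trans hμ₀ hμμ
    obtain ⟨hlt₂, hfp₂⟩ := hfix μ hμn
    set s₂ : ℝ := mst μ with hs₂def
    have hs₂pos : 0 < s₂ := lt_of_le_of_lt hμn hlt₂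
    rw [htrace s₂ hs₂pos.le] at hfp₂
    have hP₂ : 0 < 1 + T s₂ := by linarith [hT0 s₂ hs₂pos.le]
    set C : ℝ := ∑ i, e i ^ 2 / ((ζ + s₁ * e i) * (ζ + s₂ * e i)) with hCdef
    have hC0 : 0 ≤ C := Finset.sum_nonneg fun i _ =>
      div_nonneg (sq_nonneg _) (mul_pos (hd s₁ hs₁pos.le i) (hd s₂ hs₂pos.le i)).le
    have hTdiff : T s₁ - T s₂ = (s₂ - s₁) * C := by
      rw [hTdef, hCdef]
      simp only
      rw [← Finset.sum_sub_distrib, Finset.mul_sum]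
      refine Finset.sum_congr rfl fun i _ => ?_
      have h1 := (hd s₁ hs₁pos.le i).ne'
      have h2 := (hd s₂ hs₂pos.le i).ne'
      rw [div_sub_div _ _ h1 h2, ← mul_div_assoc]
      congr 1
      ring
    have hCle : s₂ * C ≤ T s₁ := by
      rw [hCdef, hTdef]
      simp only
      rw [Finset.mul_sum]
      refine Finset.sum_le_sum fun i _ => ?_
      have h1 := hd s₁ hs₁pos.le i
      have h2 := hd s₂ hs₂pos.le i
      rw [mul_div_assoc', div_le_div_iff₀ (mul_pos h1 h2) h1]
      nlinarith [mul_nonneg (mul_nonneg (hev i) h1.le) hζ.le]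
    have r₁ : μ₀ * (1 + T s₁) = s₁ * (1 + T s₁) - n := by
      rw [hfp₀]; field_simp
    have r₂ : μ * (1 + T s₂) = s₂ * (1 + T s₂) - n := by
      rw [hfp₂]; field_simp
    have hnle : (n : ℝ) ≤ s₂ * (1 + T s₂) := by
      linarith [r₂, mul_nonneg hμn hP₂.le]
    have hEq : (s₂ - s₁) * ((1 + T s₁) * (1 + T s₂) - n * C)
        = (μ - μ₀) * ((1 + T s₁) * (1 + T s₂)) := by
      linear_combination (1 + T s₂) * r₁ - (1 + T s₁) * r₂ + (n : ℝ) * hTdiff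
    have hnC : (n : ℝ) * C ≤ (1 + T s₂) * T s₁ := by
      have h1 : (n : ℝ) * C ≤ s₂ * (1 + T s₂) * C := mul_le_mul_of_nonneg_right hnle hC0
      have h3 : (1 + T s₂) * (s₂ * C) ≤ (1 + T s₂) * T s₁ :=
        mul_le_mul_of_nonneg_left hCle hP₂.le
      nlinarith [h1, h3]
    have hQ : (1 + T s₂) ≤ (1 + T s₁) * (1 + T s₂) - n * C := by nlinarith [hnC]
    have hQpos : 0 < (1 + T s₁) * (1 + T s₂) - n * C := lt_of_lt_of_le hP₂ hQ
    have hs : s₂ - s₁ = (μ - μ₀) * ((1 + T s₁) * (1 + T s₂)) /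
        ((1 + T s₁) * (1 + T s₂) - n * C) := by
      rw [eq_div_iff hQpos.ne']; exact hEq
    constructor
    · rw [hs]
      exact div_nonneg (mul_nonneg (by linarith) (mul_pos hP₁ hP₂).le) hQpos.le
    · rw [hs, div_le_iff₀ hQpos]
      have hA : 0 ≤ (μ - μ₀) * (1 + T s₁) := mul_nonneg (by linarith) hP₁.le
      have h5 := mul_le_mul_of_nonneg_left hQ hA
      linarith [h5]
  -- pass to the limit along the right neighborhood
  rw [htrace s₁ hs₁pos.le]
  have hslope : Filter.Tendsto (slope mst μ₀) (nhdsWithin μ₀ (Set.Ioi μ₀)) (nhds D) :=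
    (hasDerivAt_iff_tendsto_slope.mp hD).mono_left
      (nhdsWithin_mono _ fun x hx => ne_of_gt hx)
  have hbound : ∀ x ∈ Set.Ioi μ₀, 0 ≤ slope mst μ₀ x ∧ slope mst μ₀ x ≤ 1 + T s₁ := by
    intro x hx
    have hx' : (0:ℝ) < x - μ₀ := sub_pos.2 hx
    obtain ⟨h1, h2⟩ := key x (le_of_lt hx)
    rw [slope_def_field]
    constructor
    · exact div_nonneg h1 hx'.le
    · rw [div_le_iff₀ hx']
      linarith [h2]
  constructor
  · exact ge_of_tendsto hslope (eventually_nhdsWithin_of_forall fun x hx => (hbound x hx).1)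
  · exact le_of_tendsto hslope (eventually_nhdsWithin_of_forall fun x hx => (hbound x hx).2)
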